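/- In the setting of the proof of the Livšic theorem, with P defined on the orbit O(x) by P(f^n(x)) = A^n(x): there exists a constant T > 0 such that for every m ∈ ℕ, if f^m(x) ∈ G then ‖A^m(x)‖ ≤ T. -/

import Mathlib

open MeasureTheory Filter Metric Set Function
open scoped Topology NNReal Manifold ENNReal

noncomputable section

abbrev Euc (m : ℕ) := EuclideanSpace ℝ (Fin m)
abbrev GLd (d : ℕ) := (Euc d →L[ℝ] Euc d)ˣ

def cocycle {M : Type*} {d : ℕ} (f : M → M) (A : M → GLd d) : ℕ → M → GLd d
  | 0, _ => 1
  | n + 1, x => A (f^[n] x) * cocycle f A n x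

def cocycleCLM {M : Type*} {d : ℕ} (f : M → M) (A : M → GLd d) (n : ℕ) (x : M) :
    Euc d →L[ℝ] Euc d := (cocycle f A n x : Euc d →L[ℝ] Euc d)

def cocycleInv {M : Type*} {d : ℕ} (f : M → M) (A : M → GLd d) (n : ℕ) (x : M) :
    Euc d →L[ℝ] Euc d := (((cocycle f A n x)⁻¹ : GLd d) : Euc d →L[ℝ] Euc d)

def PeriodicObstructionVanishes {M : Type*} {d : ℕ} (f : M → M) (A : M → GLd d) : Prop :=
  ∀ n : ℕ, 0 < n → ∀ p : M, f^[n] p = p → cocycle f A n p = 1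

def fwdOrbit {M : Type*} (f : M → M) (x : M) : Set M := Set.range fun n : ℕ => f^[n] x

def measSupport {M : Type*} [TopologicalSpace M] [MeasurableSpace M] (μ : Measure M) : Set M :=
  {x | ∀ U ∈ nhds x, 0 < μ U}

def stableSet {M : Type*} [MetricSpace M] (f : M → M) (x : M) : Set M :=
  {y | Tendsto (fun n : ℕ => dist (f^[n] y) (f^[n] x)) atTop (𝓝 0)}

def localStable {M : Type*} [MetricSpace M] (f : M → M) (δ : ℝ) (x : M) : Set M :=
  stableSet f x ∩ closedBall x δ

def hyperbolicBlock {M : Type*} [MetricSpace M] (f g : M → M) (C τ δ : ℝ) : Set M :=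
  {x | (∀ y ∈ localStable f δ x, ∀ n : ℕ,
          dist (f^[n] y) (f^[n] x) ≤ C * Real.exp (-τ * n) * dist y x) ∧
       (∀ y ∈ localStable g δ x, ∀ n : ℕ,
          dist (g^[n] y) (g^[n] x) ≤ C * Real.exp (-τ * n) * dist y x)}

def dominationSet {M : Type*} {d : ℕ} (f g : M → M) (A : M → GLd d) (N : ℕ) (θ : ℝ) :
    Set M :=
  {x | (∀ k : ℕ, 1 ≤ k →
          ∏ j ∈ Finset.range k,
            (‖cocycleCLM f A N (f^[j * N] x)‖ * ‖cocycleInv f A N (f^[j * N] x)‖)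
            ≤ Real.exp (θ * k * N)) ∧
       (∀ k : ℕ, 1 ≤ k →
          ∏ j ∈ Finset.range k,
            (‖cocycleCLM g (fun y => (A (g y))⁻¹) N (g^[j * N] x)‖ *
             ‖cocycleInv g (fun y => (A (g y))⁻¹) N (g^[j * N] x)‖)
            ≤ Real.exp (θ * k * N))}

def ClosingProperty {M : Type*} [MetricSpace M] (f : M → M) (G : Set M) (C η h β : ℝ) : Prop :=
  ∀ y ∈ G, ∀ n : ℕ, dist (f^[n] y) y < β → f^[n] y ∈ G →
    ∃ p : M, f^[n] p = p ∧
      ∀ i : ℕ, i ≤ n → dist (f^[i] y) (f^[i] p) ≤ h * C * Real.exp (-η * (min i (n - i) : ℕ))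

def freqGT {M : Type*} (T : M → M) (S : Set M) (x : M) : Prop :=
  ∃ c : ℝ, 1 / 2 < c ∧
    Tendsto (fun n : ℕ => (∑ i ∈ Finset.Icc 1 n, S.indicator (fun _ => (1 : ℝ)) (T^[i] x)) / n)
      atTop (𝓝 c)

def freqCond {M : Type*} (f g : M → M) (S : Set M) (x : M) : Prop :=
  freqGT f S x ∧ freqGT g S x

section Manifold

variable {m : ℕ} {M : Type*} [MetricSpace M] [CompactSpace M]
  [ChartedSpace (Euc m) M] [IsManifold (𝓡 m) (⊤ : ℕ∞) M]

def tangentNorm {x : M} (v : TangentSpace (𝓡 m) x) : ℝ := ‖show Euc m from v‖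

def IsC1HolderDiffeo (f : M → M) : Prop :=
  ∃ g : M → M, Function.LeftInverse g f ∧ Function.RightInverse g f ∧
    ContMDiff (𝓡 m) (𝓡 m) 1 f ∧ ContMDiff (𝓡 m) (𝓡 m) 1 g ∧
    ∃ εh K : ℝ≥0, 0 < εh ∧ ∀ x : M,
      HolderOnWith K εh (fderiv ℝ (writtenInExtChartAt (𝓡 m) (𝓡 m) x f))
        (extChartAt (𝓡 m) x).target

def IsHyperbolicMeasure [MeasurableSpace M] (f : M → M) (μ : Measure M) : Prop :=
  ∀ᵐ x ∂μ, ∀ v : TangentSpace (𝓡 m) x, v ≠ 0 →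
    ∃ lam : ℝ, lam ≠ 0 ∧
      Tendsto (fun n : ℕ => Real.log (tangentNorm (mfderiv (𝓡 m) (𝓡 m) (f^[n]) x v)) / n)
        atTop (𝓝 lam)

def IsChiHyperbolic [MeasurableSpace M] (f : M → M) (μ : Measure M) (χ : ℝ) : Prop :=
  0 < χ ∧ ∀ᵐ x ∂μ, ∀ v : TangentSpace (𝓡 m) x, v ≠ 0 →
    ∃ lam : ℝ, χ < |lam| ∧
      Tendsto (fun n : ℕ => Real.log (tangentNorm (mfderiv (𝓡 m) (𝓡 m) (f^[n]) x v)) / n)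
        atTop (𝓝 lam)

def pesinSet (f g : M → M) (χ ε N : ℝ) : Set M :=
  {x | ∃ Es Eu : Submodule ℝ (TangentSpace (𝓡 m) x),
    Es ⊔ Eu = ⊤ ∧ Es ⊓ Eu = ⊥ ∧
    (∀ v ∈ Es, ∀ n : ℕ,
      tangentNorm (mfderiv (𝓡 m) (𝓡 m) (f^[n]) x v) ≤
        N * Real.exp (-(χ - ε) * n) * tangentNorm v) ∧
    (∀ v ∈ Eu, ∀ n : ℕ,
      tangentNorm (mfderiv (𝓡 m) (𝓡 m) (g^[n]) x v) ≤
        N * Real.exp (-(χ - ε) * n) * tangentNorm v)}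

end Manifold

def HasLocalProductStructure {M : Type*} [MetricSpace M] [MeasurableSpace M]
    (f g : M → M) (μ : Measure M) : Prop :=
  ∃ δ₀ : ℝ, 0 < δ₀ ∧ ∀ x ∈ measSupport μ, ∀ δ : ℝ, 0 < δ → δ ≤ δ₀ →
    ∃ (Nu Ns : Set M) (b : M → M → M) (μu μs : Measure M),
      IsCompact Nu ∧ IsCompact Ns ∧ x ∈ Nu ∧ x ∈ Ns ∧
      Nu ⊆ localStable g δ x ∧ Ns ⊆ localStable f δ x ∧
      (∀ z ∈ Nu, ∀ w ∈ Ns, b z w ∈ stableSet f z ∩ stableSet g w) ∧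
      Set.InjOn (fun p : M × M => b p.1 p.2) (Nu ×ˢ Ns) ∧
      μu (Set.univ \ Nu) = 0 ∧ μs (Set.univ \ Ns) = 0 ∧
      μ.restrict (Set.image2 b Nu Ns) ≪
        Measure.map (fun p : M × M => b p.1 p.2) (μu.prod μs) ∧
      Measure.map (fun p : M × M => b p.1 p.2) (μu.prod μs) ≪
        μ.restrict (Set.image2 b Nu Ns)

def topLyapunov {M : Type*} {d : ℕ} (f : M → M) (A : M → GLd d) (x : M) : ℝ :=
  Filter.limsup (fun n : ℕ => Real.log ‖cocycleCLM f A n x‖ / n) Filter.atTop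

def IsSDominated {M : Type*} [MetricSpace M] {d : ℕ} (f g : M → M) (A : M → GLd d)
    (s : ℝ) (x : M) : Prop :=
  ∃ (Cc τ δ θ : ℝ) (N : ℕ), 0 < Cc ∧ 0 < τ ∧ 0 < δ ∧ 0 < θ ∧ 1 ≤ N ∧ s * θ < τ ∧
    x ∈ hyperbolicBlock f g Cc τ δ ∩ dominationSet f g A N θ

def zOrbit {M : Type*} (f g : M → M) (x : M) : Set M :=
  {y | (∃ n : ℕ, f^[n] x = y) ∨ ∃ n : ℕ, g^[n] x = y}

lemma cocycle_add' {M : Type*} {d : ℕ} (f : M → M) (A : M → GLd d) (n k : ℕ) (x : M) :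
    cocycle f A (n + k) x = cocycle f A n (f^[k] x) * cocycle f A k x := by
  induction n with
  | zero => simp [cocycle]
  | succ n ih =>
      have h1 : n + 1 + k = (n + k) + 1 := by omega
      rw [h1]
      show A (f^[n + k] x) * cocycle f A (n + k) x = _
      rw [ih]
      show _ = (A (f^[n] (f^[k] x)) * cocycle f A n (f^[k] x)) * cocycle f A k x
      rw [← Function.iterate_add_apply, mul_assoc]

/-- **Corollary 3.4.** In the setting of the proof of the Livšic theorem, with `P` defined
on the orbit of `x` by `P(f^n(x)) = A^n(x)`: there is a constant `T > 0` such that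
whenever `f^m(x) ∈ G` one has `‖A^m(x)‖ ≤ T`. -/
theorem corollary_bound_T
    {m d : ℕ} {M : Type*} [MetricSpace M] [CompactSpace M] [Nonempty M]
    [ChartedSpace (Euc m) M] [IsManifold (𝓡 m) (⊤ : ℕ∞) M]
    [MeasurableSpace M] [BorelSpace M]
    (f : M → M) (hf : IsC1HolderDiffeo (m := m) f)
    (μ : Measure M) [IsProbabilityMeasure μ] (herg : Ergodic f μ)
    (χ : ℝ) (hχ : IsChiHyperbolic (m := m) f μ χ)
    (A : M → GLd d) (α K : ℝ≥0) (hα : 0 < α)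
    (hA : HolderWith K α fun w => (A w : Euc d →L[ℝ] Euc d))
    (hobs : PeriodicObstructionVanishes f A)
    (G : Set M) (hGcomp : IsCompact G) (hGbig : (9 / 10 : ℝ≥0∞) < μ G)
    (x : M) (hxG : x ∈ G)
    (hdenseG : G ⊆ closure (fwdOrbit f x ∩ G))
    (hdenseSupp : measSupport μ ⊆ closure (fwdOrbit f x))
    (ε η C N : ℝ) (hε : 0 < ε) (hηε : ε < η) (hηχ : η < χ - ε)
    (hC : 0 < C) (hN : 1 ≤ N) (hεsmall : 10 * ε < (α : ℝ) * η)
    (hgrow : ∀ z ∈ G, ∀ n : ℕ,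
      ‖cocycleCLM f A n z‖ ≤ N * Real.exp (ε * n) ∧
      ‖cocycleInv f A n z‖ ≤ N * Real.exp (ε * n))
    (h β Ctil : ℝ) (hh0 : 0 < h) (hh1 : h < 1) (hβ0 : 0 < β) (hβh : β < h)
    (hclose : ClosingProperty f G C η h β) (hCtil : 0 < Ctil)
    (hprop : ∀ (z : M) (n : ℕ), z ∈ fwdOrbit f x ∩ G → f^[n] z ∈ fwdOrbit f x ∩ G →
      dist z (f^[n] z) < β → ‖cocycleCLM f A n z - 1‖ ≤ Ctil * h ^ (α : ℝ)) :
    ∃ T : ℝ, 0 < T ∧ ∀ mm : ℕ, f^[mm] x ∈ G → ‖cocycleCLM f A mm x‖ ≤ T := by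
  classical
  have hβ2 : 0 < β / 2 := by positivity
  obtain ⟨t, ht⟩ := hGcomp.elim_finite_subcover (fun c : M => Metric.ball c (β / 2))
    (fun _ => Metric.isOpen_ball)
    (fun y hy => Set.mem_iUnion.2 ⟨y, Metric.mem_ball_self hβ2⟩)
  set P : M → ℕ → Prop := fun c k => f^[k] x ∈ G ∧ f^[k] x ∈ Metric.ball c (β / 2) with hP
  set g : M → ℝ := fun c => if hc : ∃ k, P c k then ‖cocycleCLM f A (Nat.find hc) x‖ else 0
    with hg
  have hgnn : ∀ c, 0 ≤ g c := by
    intro c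
    by_cases hc : ∃ k, P c k
    · simp only [hg, dif_pos hc]; positivity
    · simp only [hg, dif_neg hc]; exact le_rfl
  have hKnn : (0 : ℝ) ≤ 1 + Ctil * h ^ (α : ℝ) := by positivity
  have hsumnn : 0 ≤ ∑ c ∈ t, g c := Finset.sum_nonneg fun c _ => hgnn c
  refine ⟨(1 + Ctil * h ^ (α : ℝ)) * (∑ c ∈ t, g c) + 1, by nlinarith, ?_⟩
  intro mm hmm
  obtain ⟨c, hct, hcball⟩ : ∃ c ∈ t, f^[mm] x ∈ Metric.ball c (β / 2) := by
    have := ht hmm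
    simpa using this
  have hex : ∃ k, P c k := ⟨mm, hmm, hcball⟩
  set m0 := Nat.find hex with hm0
  have hm0spec : P c m0 := Nat.find_spec hex
  have hm0le : m0 ≤ mm := Nat.find_min' hex ⟨hmm, hcball⟩
  set n := mm - m0 with hn
  have hsplit : mm = n + m0 := by omega
  have hz : f^[n] (f^[m0] x) = f^[mm] x := by
    rw [← Function.iterate_add_apply, ← hsplit]
  have hd : dist (f^[m0] x) (f^[n] (f^[m0] x)) < β := by
    rw [hz]
    calc dist (f^[m0] x) (f^[mm] x)
        ≤ dist (f^[m0] x) c + dist c (f^[mm] x) := dist_triangle _ _ _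
      _ < β / 2 + β / 2 :=
          add_lt_add hm0spec.2 (by rw [dist_comm]; exact hcball)
      _ = β := by ring
  have horb1 : f^[m0] x ∈ fwdOrbit f x ∩ G := ⟨⟨m0, rfl⟩, hm0spec.1⟩
  have horb2 : f^[n] (f^[m0] x) ∈ fwdOrbit f x ∩ G := by
    rw [hz]; exact ⟨⟨mm, rfl⟩, hmm⟩
  have hb := hprop _ n horb1 horb2 hd
  have hn1 : ‖cocycleCLM f A n (f^[m0] x)‖ ≤ 1 + Ctil * h ^ (α : ℝ) := by
    have heq : cocycleCLM f A n (f^[m0] x) =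
        (cocycleCLM f A n (f^[m0] x) - 1) + 1 := (sub_add_cancel _ _).symm
    calc ‖cocycleCLM f A n (f^[m0] x)‖
        = ‖(cocycleCLM f A n (f^[m0] x) - 1) + 1‖ := by rw [← heq]
      _ ≤ ‖cocycleCLM f A n (f^[m0] x) - 1‖ + ‖(1 : Euc d →L[ℝ] Euc d)‖ :=
          norm_add_le _ _
      _ ≤ Ctil * h ^ (α : ℝ) + 1 :=
          add_le_add hb ContinuousLinearMap.norm_id_le
      _ = 1 + Ctil * h ^ (α : ℝ) := by ring
  have hmul : ‖cocycleCLM f A mm x‖ ≤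
      ‖cocycleCLM f A n (f^[m0] x)‖ * ‖cocycleCLM f A m0 x‖ := by
    have hc : cocycle f A mm x = cocycle f A n (f^[m0] x) * cocycle f A m0 x := by
      rw [hsplit]; exact cocycle_add' f A n m0 x
    unfold cocycleCLM
    rw [hc, Units.val_mul]
    exact norm_mul_le _ _
  have hg_eq : g c = ‖cocycleCLM f A m0 x‖ := by
    simp only [hg, dif_pos hex, hm0]
  have hsum : g c ≤ ∑ c' ∈ t, g c' := Finset.single_le_sum (fun c' _ => hgnn c') hct
  have hnorm_nn : 0 ≤ ‖cocycleCLM f A m0 x‖ := norm_nonneg _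
  calc ‖cocycleCLM f A mm x‖
      ≤ ‖cocycleCLM f A n (f^[m0] x)‖ * ‖cocycleCLM f A m0 x‖ := hmul
    _ ≤ (1 + Ctil * h ^ (α : ℝ)) * ‖cocycleCLM f A m0 x‖ :=
        mul_le_mul_of_nonneg_right hn1 hnorm_nn
    _ = (1 + Ctil * h ^ (α : ℝ)) * g c := by rw [hg_eq]
    _ ≤ (1 + Ctil * h ^ (α : ℝ)) * (∑ c' ∈ t, g c') :=
        mul_le_mul_of_nonneg_left hsum hKnn
    _ ≤ (1 + Ctil * h ^ (α : ℝ)) * (∑ c' ∈ t, g c') + 1 := by linarith
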